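/- Let 𝒜 be a unital C*-algebra, φ : 𝒜 → ℂ a state, m ≥ 1 an integer and k ∈ {1,…,m}. Let r ∈ 𝒜 and let B ∈ M_m(ℂ) be invertible with ‖r‖·‖B^{-1}‖ < 1 and [B^{-1}]_{k,k} ≠ 0. Then the matrix B − r⊗E_{k,k} (the element of M_m(𝒜) whose (k,k) entry is B_{k,k}·1_𝒜 − r and whose other entries are B_{i,j}·1_𝒜) is invertible in M_m(𝒜), and E( (B − r⊗E_{k,k})^{-1} ) = B^{-1} + [B^{-1}]_{k,k}^{-2} ( G_r([B^{-1}]_{k,k}^{-1}) − [B^{-1}]_{k,k} ) · B^{-1} E_{k,k} B^{-1}. -/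

import Mathlib

open Matrix
open scoped ComplexOrder

/-- The operator norm (largest singular value) of a complex matrix, realized as the norm of
the induced linear operator on Euclidean space. -/
noncomputable def opNorm {m n : ℕ} (A : Matrix (Fin m) (Fin n) ℂ) : ℝ :=
  ‖LinearMap.toContinuousLinearMap (Matrix.toEuclideanLin A)‖

/-- Each coordinate of a Euclidean vector is bounded by its norm. -/
lemma euclid_coord_le {n : ℕ} (v : EuclideanSpace ℂ (Fin n)) (i : Fin n) : ‖v i‖ ≤ ‖v‖ := by
  rw [EuclideanSpace.norm_eq]
  calc ‖v i‖ = Real.sqrt (‖v i‖ ^ 2) := (Real.sqrt_sq (norm_nonneg _)).symm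
    _ ≤ _ := Real.sqrt_le_sqrt
        (Finset.single_le_sum (fun j _ => sq_nonneg ‖v j‖) (Finset.mem_univ i))

/-- Each entry of a complex matrix is bounded in modulus by the operator norm. -/
lemma entry_norm_le_opNorm {m n : ℕ} (A : Matrix (Fin m) (Fin n) ℂ) (i : Fin m) (j : Fin n) :
    ‖A i j‖ ≤ opNorm A := by
  set v : EuclideanSpace ℂ (Fin m) :=
    (LinearMap.toContinuousLinearMap (Matrix.toEuclideanLin A))
      (EuclideanSpace.single j (1 : ℂ)) with hvdef
  have h := (LinearMap.toContinuousLinearMap (Matrix.toEuclideanLin A)).le_opNorm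
      (EuclideanSpace.single j (1 : ℂ))
  rw [EuclideanSpace.norm_single] at h
  simp only [norm_one, mul_one] at h
  have hv : v i = A i j := by
    show (A *ᵥ Pi.single j (1 : ℂ)) i = A i j
    rw [Matrix.mulVec_single]
    exact mul_one _
  calc ‖A i j‖ = ‖v i‖ := by rw [hv]
    _ ≤ ‖v‖ := euclid_coord_le v i
    _ ≤ opNorm A := h

/-- Sandwiching a matrix between two `(k,k)` standard basis matrices. -/
lemma sbm_sandwich {α : Type*} [Ring α] {n : Type*} [Fintype n] [DecidableEq n]
    (k : n) (a b : α) (X : Matrix n n α) :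
    Matrix.single k k a * X * Matrix.single k k b = Matrix.single k k (a * X k k * b) := by
  have hne : ∀ (i j : n), ¬(i = k ∧ j = k) → Matrix.single k k (a * X k k * b) i j = 0 :=
    fun i j h => Matrix.single_apply_of_ne k k _ i j
      (fun hc => h ⟨hc.1.symm, hc.2.symm⟩)
  ext i j
  by_cases hi : i = k <;> by_cases hj : j = k
  · simp [hi, hj]
  · simp [hi, hj, hne k j (fun hc => hj hc.2)]
  · simp [hi, hj, hne i k (fun hc => hi hc.1)]
  · simp [hi, hj, hne i j (fun hc => hi hc.1)]

/-- Entry of a product `X * E_{kk}(c) * Y`. -/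
lemma mul_sbm_mul {α : Type*} [Ring α] {n : Type*} [Fintype n] [DecidableEq n]
    (k : n) (c : α) (X Y : Matrix n n α) (i j : n) :
    (X * Matrix.single k k c * Y) i j = X i k * c * Y k j := by
  rw [Matrix.mul_apply]
  rw [Finset.sum_eq_single k]
  · rw [Matrix.mul_single_apply_same]
  · intro l _ hl
    simp [hl]
  · intro h; exact absurd (Finset.mem_univ k) h

/-- let `𝒜` be a unital C*-algebra, `φ : 𝒜 → ℂ` a state, `k ∈ {1,…,m}`,
`r ∈ 𝒜`, and `B ∈ M_m(ℂ)` invertible with `‖r‖·‖B⁻¹‖ < 1` and `[B⁻¹]_{k,k} ≠ 0`.  Then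
`B − r⊗E_{k,k}` is invertible in `M_m(𝒜)` and
`E((B − r⊗E_{k,k})⁻¹) = B⁻¹ + [B⁻¹]_{k,k}⁻² (G_r([B⁻¹]_{k,k}⁻¹) − [B⁻¹]_{k,k}) B⁻¹ E_{k,k} B⁻¹`,
where `E(X)` applies `φ` entrywise and `G_r(ζ) = φ((ζ·1 − r)⁻¹)` is the scalar Cauchy
transform of `r`. -/
theorem cauchyTransform_rank_one_block
    {𝒜 : Type*} [NormedRing 𝒜] [StarRing 𝒜] [CStarRing 𝒜]
    [NormedAlgebra ℂ 𝒜] [CompleteSpace 𝒜] [StarModule ℂ 𝒜]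
    (φ : 𝒜 →ₗ[ℂ] ℂ) (hφ1 : φ 1 = 1) (hφpos : ∀ a : 𝒜, 0 ≤ φ (star a * a))
    {m : ℕ} (hm : 1 ≤ m) (k : Fin m) (r : 𝒜)
    (B : Matrix (Fin m) (Fin m) ℂ) (hB : IsUnit B.det)
    (hnorm : ‖r‖ * opNorm B⁻¹ < 1) (hkk : B⁻¹ k k ≠ 0) :
    IsUnit ((Matrix.of fun i j => algebraMap ℂ 𝒜 (B i j)) - Matrix.single k k r)
    ∧ (Matrix.of fun i j =>
        φ ((Ring.inverse
          ((Matrix.of fun i j => algebraMap ℂ 𝒜 (B i j)) - Matrix.single k k r)) i j))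
      = B⁻¹ + (((B⁻¹ k k) ^ 2)⁻¹ *
          (φ (Ring.inverse (algebraMap ℂ 𝒜 (B⁻¹ k k)⁻¹ - r)) - B⁻¹ k k)) •
            (B⁻¹ * Matrix.single k k (1 : ℂ) * B⁻¹) := by
  classical
  set β : ℂ := B⁻¹ k k with hβdef
  have hβ0 : β ≠ 0 := hkk
  -- the scalar `β • r` has norm `< 1`
  have hβr : ‖β • r‖ < 1 := by
    rw [norm_smul]
    have h1 : ‖β‖ ≤ opNorm B⁻¹ := entry_norm_le_opNorm B⁻¹ k k
    calc ‖β‖ * ‖r‖ ≤ opNorm B⁻¹ * ‖r‖ :=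
          mul_le_mul_of_nonneg_right h1 (norm_nonneg r)
      _ = ‖r‖ * opNorm B⁻¹ := mul_comm _ _
      _ < 1 := hnorm
  set u : 𝒜ˣ := Units.oneSub (β • r) hβr with hudef
  set w : 𝒜 := ↑u⁻¹ with hwdef
  have huval : (u : 𝒜) = 1 - β • r := Units.val_oneSub _ _
  -- `r` commutes with `w`
  have hcu : Commute r w := by
    have hc : Commute r ((u : 𝒜)) := by
      rw [huval]
      exact (Commute.one_right r).sub_right ((Commute.refl r).smul_right β)
    exact hc.units_inv_right
  set s : 𝒜 := w * r with hsdef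
  have hw : w * (1 - β • r) = 1 := by rw [← huval]; exact u.inv_mul
  have hw' : (1 - β • r) * w = 1 := by rw [← huval]; exact u.mul_inv
  have hw2 : w - β • s = 1 := by
    rw [← hw, mul_sub, mul_one, mul_smul_comm, hsdef]
  have hw3 : w = 1 + β • s := eq_add_of_sub_eq hw2
  -- key scalar identities
  have hrs : s = r + r * algebraMap ℂ 𝒜 β * s := by
    have h1 : r * algebraMap ℂ 𝒜 β * s = β • (w * r * r) := by
      rw [← Algebra.commutes β r, mul_assoc, ← Algebra.smul_def, hsdef,
        ← mul_assoc, hcu.eq]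
    calc s = (1 + β • s) * r := by rw [← hw3, hsdef]
      _ = r + β • (w * r * r) := by rw [add_mul, one_mul, smul_mul_assoc, hsdef]
      _ = r + r * algebraMap ℂ 𝒜 β * s := by rw [h1]
  have hsr : s = r + s * algebraMap ℂ 𝒜 β * r := by
    have h1 : s * algebraMap ℂ 𝒜 β * r = β • (w * r * r) := by
      rw [← Algebra.commutes β s, mul_assoc, ← Algebra.smul_def, hsdef]
    calc s = (1 + β • s) * r := by rw [← hw3, hsdef]
      _ = r + β • (w * r * r) := by rw [add_mul, one_mul, smul_mul_assoc, hsdef]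
      _ = r + s * algebraMap ℂ 𝒜 β * r := by rw [h1]
  -- matrices
  set M : Matrix (Fin m) (Fin m) 𝒜 :=
    (Matrix.of fun i j => algebraMap ℂ 𝒜 (B i j)) - Matrix.single k k r with hMdef
  set P : Matrix (Fin m) (Fin m) 𝒜 := (B⁻¹).map (algebraMap ℂ 𝒜) with hPdef
  have hιB : (Matrix.of fun i j => algebraMap ℂ 𝒜 (B i j)) = B.map (algebraMap ℂ 𝒜) := rfl
  have hBB : B.map (algebraMap ℂ 𝒜) * P = 1 := by
    rw [hPdef, ← Matrix.map_mul, Matrix.mul_nonsing_inv B hB,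
      Matrix.map_one _ (map_zero _) (map_one _)]
  have hBB' : P * B.map (algebraMap ℂ 𝒜) = 1 := by
    rw [hPdef, ← Matrix.map_mul, Matrix.nonsing_inv_mul B hB,
      Matrix.map_one _ (map_zero _) (map_one _)]
  have hPkk : P k k = algebraMap ℂ 𝒜 β := rfl
  have sand : ∀ a b : 𝒜, Matrix.single k k a * P * Matrix.single k k b
      = Matrix.single k k (a * algebraMap ℂ 𝒜 β * b) := fun a b => by
    rw [sbm_sandwich, hPkk]
  set Es : Matrix (Fin m) (Fin m) 𝒜 := Matrix.single k k s with hEsdef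
  set Er : Matrix (Fin m) (Fin m) 𝒜 := Matrix.single k k r with hErdef
  set N : Matrix (Fin m) (Fin m) 𝒜 := P + P * Es * P with hNdef
  have hMN : M * N = 1 := by
    have t1 : B.map (algebraMap ℂ 𝒜) * (P * Es * P) = Es * P := by
      rw [← mul_assoc, ← mul_assoc, hBB, one_mul]
    have t2 : Er * (P * Es * P)
        = Matrix.single k k (r * algebraMap ℂ 𝒜 β * s) * P := by
      rw [← mul_assoc, ← mul_assoc, hErdef, hEsdef, sand]
    have hEsplit : Es = Er + Matrix.single k k (r * algebraMap ℂ 𝒜 β * s) := by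
      rw [hEsdef, hErdef, ← Matrix.single_add, ← hrs]
    calc M * N
        = (B.map (algebraMap ℂ 𝒜) * P + B.map (algebraMap ℂ 𝒜) * (P * Es * P))
            - (Er * P + Er * (P * Es * P)) := by
          rw [hMdef, hNdef, hιB, sub_mul, mul_add, mul_add]
      _ = (1 + Es * P)
            - (Er * P + Matrix.single k k (r * algebraMap ℂ 𝒜 β * s) * P) := by
          rw [hBB, t1, t2]
      _ = 1 := by
          rw [hEsplit, add_mul]; abel
  have hNM : N * M = 1 := by
    have t1 : P * Es * P * B.map (algebraMap ℂ 𝒜) = P * Es := by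
      rw [mul_assoc, hBB', mul_one]
    have t2 : P * Es * P * Er
        = P * Matrix.single k k (s * algebraMap ℂ 𝒜 β * r) := by
      rw [mul_assoc P Es P, mul_assoc, hEsdef, hErdef, sand]
    have hEsplit : P * Es = P * Er
        + P * Matrix.single k k (s * algebraMap ℂ 𝒜 β * r) := by
      rw [← mul_add, hEsdef, hErdef, ← Matrix.single_add, ← hsr]
    calc N * M
        = (P * B.map (algebraMap ℂ 𝒜) - P * Er)
            + (P * Es * P * B.map (algebraMap ℂ 𝒜) - P * Es * P * Er) := by
          rw [hMdef, hNdef, hιB, add_mul, mul_sub, mul_sub]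
      _ = (1 - P * Er) + (P * Es - P * Matrix.single k k (s * algebraMap ℂ 𝒜 β * r)) := by
          rw [hBB', t1, t2]
      _ = 1 := by rw [hEsplit]; abel
  set U : (Matrix (Fin m) (Fin m) 𝒜)ˣ := ⟨M, N, hMN, hNM⟩ with hUdef
  have hinv : Ring.inverse M = N := Ring.inverse_unit U
  refine ⟨⟨U, rfl⟩, ?_⟩
  -- compute `φ s`
  have hφalg : ∀ c : ℂ, φ (algebraMap ℂ 𝒜 c) = c := fun c => by
    rw [Algebra.algebraMap_eq_smul_one, LinearMap.map_smul, hφ1, smul_eq_mul, mul_one]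
  have hval : algebraMap ℂ 𝒜 β⁻¹ - r = β⁻¹ • ((1 : 𝒜) - β • r) := by
    rw [smul_sub, smul_smul, inv_mul_cancel₀ hβ0, one_smul,
      Algebra.algebraMap_eq_smul_one]
  have hV1 : (algebraMap ℂ 𝒜 β⁻¹ - r) * (β • w) = 1 := by
    rw [hval, smul_mul_assoc, mul_smul_comm, smul_smul, inv_mul_cancel₀ hβ0, one_smul, hw']
  have hV2 : (β • w) * (algebraMap ℂ 𝒜 β⁻¹ - r) = 1 := by
    rw [hval, smul_mul_assoc, mul_smul_comm, smul_smul, mul_inv_cancel₀ hβ0, one_smul, hw]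
  set V : 𝒜ˣ := ⟨algebraMap ℂ 𝒜 β⁻¹ - r, β • w, hV1, hV2⟩ with hVdef
  have hRinv : Ring.inverse (algebraMap ℂ 𝒜 β⁻¹ - r) = β • w := Ring.inverse_unit V
  have hφs : φ s = β⁻¹ * (φ w - 1) := by
    have h1 : β • s = w - 1 := by rw [hw3]; exact (add_sub_cancel_left 1 (β • s)).symm
    have h2 : s = β⁻¹ • (w - (1 : 𝒜)) := by
      rw [← h1, smul_smul, inv_mul_cancel₀ hβ0, one_smul]
    rw [h2, φ.map_smul, smul_eq_mul, φ.map_sub, hφ1]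
  have hcoeff : ((β ^ 2)⁻¹ * (φ (Ring.inverse (algebraMap ℂ 𝒜 β⁻¹ - r)) - β)) = φ s := by
    rw [hRinv, LinearMap.map_smul, smul_eq_mul, hφs]
    field_simp
  -- entrywise computation
  rw [hinv]
  ext i j
  have hφentry : φ (N i j) = B⁻¹ i j + (B⁻¹ i k * B⁻¹ k j) * φ s := by
    have e1 : N i j = P i j + P i k * s * P k j := by
      rw [hNdef, Matrix.add_apply, hEsdef, mul_sbm_mul]
    have e2 : P i k * s * P k j = (B⁻¹ i k * B⁻¹ k j) • s := by
      show algebraMap ℂ 𝒜 (B⁻¹ i k) * s * algebraMap ℂ 𝒜 (B⁻¹ k j) = _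
      calc algebraMap ℂ 𝒜 (B⁻¹ i k) * s * algebraMap ℂ 𝒜 (B⁻¹ k j)
          = algebraMap ℂ 𝒜 (B⁻¹ i k) * (algebraMap ℂ 𝒜 (B⁻¹ k j) * s) := by
            rw [mul_assoc, ← Algebra.commutes (B⁻¹ k j) s]
        _ = algebraMap ℂ 𝒜 (B⁻¹ i k * B⁻¹ k j) * s := by
            rw [← mul_assoc, ← (algebraMap ℂ 𝒜).map_mul]
        _ = (B⁻¹ i k * B⁻¹ k j) • s := (Algebra.smul_def _ _).symm
    have e3 : P i j = algebraMap ℂ 𝒜 (B⁻¹ i j) := rfl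
    rw [e1, e2, φ.map_add, φ.map_smul, smul_eq_mul, e3, hφalg]
  rw [Matrix.of_apply, hφentry, Matrix.add_apply, Matrix.smul_apply, mul_sbm_mul,
    smul_eq_mul, ← hcoeff]
  ring
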